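/- Let v ≥ 1 be an integer, λ̃ > 0 and ρ > 0 real numbers, and let k ∈ {1,…,v}. Then ∫_{B_v(ρ)} x_k² · (2πλ̃)^{-v/2} · exp(−∑_{i=1}^v x_i²/(2λ̃)) dx = λ̃ · F_{v+2}(ρ/λ̃). Consequently, in Tallis' isotropic limit the truncated second moment satisfies μ_k = λ̃ · F_{v+2}(ρ/λ̃)/F_v(ρ/λ̃). -/

import Mathlib

open Real MeasureTheory

/-- Chi-squared cumulative distribution function with `ν` degrees of freedom. -/
noncomputable def chiCDF (ν x : ℝ) : ℝ :=
  ((2 : ℝ) ^ (ν / 2) * Real.Gamma (ν / 2))⁻¹ *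
    ∫ t in (0 : ℝ)..x, t ^ (ν / 2 - 1) * Real.exp (-t / 2)

open Set Metric in
private lemma aux_oneD (v m : ℕ) (hv : 1 ≤ v) {lamt ρ : ℝ} (hl : 0 < lamt) (hρ : 0 < ρ) :
    ∫ y in Ioi (0:ℝ), y ^ (v - 1) • (Set.indicator {r : ℝ | r ^ 2 ≤ ρ}
        (fun r => (r ^ 2) ^ m * Real.exp (-(r ^ 2) / (2 * lamt)))) y
      = (lamt ^ (((v : ℝ) + 2 * m) / 2) / 2) *
          ∫ t in (0:ℝ)..(ρ / lamt), t ^ (((v : ℝ) + 2 * m) / 2 - 1) * Real.exp (-t / 2) := by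
  classical
  set ν : ℝ := (v : ℝ) + 2 * m with hν
  set h : ℝ → ℝ := fun t => (1/2) * (t ^ (ν/2 - 1) * Real.exp (-t / (2 * lamt))) with hh
  set f : ℝ → ℝ := Set.indicator (Ioc 0 ρ) h with hf
  have step1 : ∫ y in Ioi (0:ℝ), y ^ (v - 1) • (Set.indicator {r : ℝ | r ^ 2 ≤ ρ}
        (fun r => (r ^ 2) ^ m * Real.exp (-(r ^ 2) / (2 * lamt)))) y
      = ∫ y in Ioi (0:ℝ), ((2:ℝ) * y ^ ((2:ℝ) - 1)) • f (y ^ (2:ℝ)) := by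
    apply setIntegral_congr_fun measurableSet_Ioi
    intro y hy
    have hy0 : (0:ℝ) < y := hy
    dsimp only
    rw [show ((2:ℝ) - 1) = 1 by norm_num, Real.rpow_one y, Real.rpow_two y]
    by_cases hmem : y ^ (2:ℕ) ≤ ρ
    · rw [Set.indicator_of_mem (show y ∈ {r : ℝ | r ^ 2 ≤ ρ} from hmem),
        hf, Set.indicator_of_mem (show y ^ (2:ℕ) ∈ Ioc 0 ρ from ⟨by positivity, hmem⟩), hh]
      beta_reduce
      have e1 : y ^ (v - 1 : ℕ) = y ^ ((v:ℝ) - 1) := by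
        rw [← Real.rpow_natCast y (v-1), Nat.cast_sub hv, Nat.cast_one]
      have e2 : ((y ^ (2:ℕ) : ℝ)) ^ m = y ^ (2 * (m:ℝ)) := by
        rw [← Real.rpow_natCast (y ^ (2:ℕ)) m, ← Real.rpow_two, ← Real.rpow_mul hy0.le]
      have e3 : (y ^ (2:ℕ) : ℝ) ^ (ν/2 - 1) = y ^ (ν - 2) := by
        rw [← Real.rpow_two, ← Real.rpow_mul hy0.le]
        ring_nf
      rw [smul_eq_mul, smul_eq_mul, e1, e2, e3]
      have key : y ^ ((v:ℝ) - 1) * y ^ (2 * (m:ℝ)) = y * y ^ (ν - 2) := by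
        rw [← Real.rpow_add hy0]
        nth_rewrite 2 [← Real.rpow_one y]
        rw [← Real.rpow_add hy0]
        congr 1
        rw [hν]; ring
      calc y ^ ((v:ℝ) - 1) * (y ^ (2 * (m:ℝ)) * Real.exp (-(y ^ (2:ℕ)) / (2 * lamt)))
          = (y ^ ((v:ℝ) - 1) * y ^ (2 * (m:ℝ))) * Real.exp (-(y ^ (2:ℕ)) / (2 * lamt)) := by ring
        _ = (y * y ^ (ν - 2)) * Real.exp (-(y ^ (2:ℕ)) / (2 * lamt)) := by rw [key]
        _ = 2 * y * (1/2 * (y ^ (ν - 2) * Real.exp (-(y ^ (2:ℕ)) / (2 * lamt)))) := by ring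
    · rw [Set.indicator_of_notMem (show y ∉ {r : ℝ | r ^ 2 ≤ ρ} from hmem),
        hf, Set.indicator_of_notMem (show y ^ (2:ℕ) ∉ Ioc 0 ρ from fun hc => hmem hc.2),
        smul_zero, smul_zero]
  rw [step1, integral_comp_rpow_Ioi_of_pos (by norm_num : (0:ℝ) < 2)]
  rw [hf, setIntegral_indicator measurableSet_Ioc,
    Set.inter_eq_right.mpr Set.Ioc_subset_Ioi_self, ← intervalIntegral.integral_of_le hρ.le]
  have hsub := intervalIntegral.integral_comp_mul_left (a := (0:ℝ)) (b := ρ/lamt) (f := h)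
    (c := lamt) hl.ne'
  rw [mul_zero, mul_div_cancel₀ _ hl.ne'] at hsub
  have hstep : ∫ t in (0:ℝ)..ρ, h t = lamt * ∫ s in (0:ℝ)..(ρ/lamt), h (lamt * s) := by
    rw [hsub, smul_eq_mul, ← mul_assoc, mul_inv_cancel₀ hl.ne', one_mul]
  rw [hstep]
  have hcong : ∀ s ∈ Set.uIcc (0:ℝ) (ρ/lamt),
      h (lamt * s) = ((1/2) * lamt ^ (ν/2 - 1)) * (s ^ (ν/2 - 1) * Real.exp (-s / 2)) := by
    intro s hs
    have hs0 : 0 ≤ s := by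
      rw [Set.uIcc_of_le (by positivity : (0:ℝ) ≤ ρ/lamt)] at hs
      exact hs.1
    have hln : lamt ≠ 0 := hl.ne'
    rw [hh]
    dsimp only
    rw [Real.mul_rpow hl.le hs0, show -(lamt*s)/(2*lamt) = -s/2 by field_simp]
    ring
  rw [intervalIntegral.integral_congr hcong, intervalIntegral.integral_const_mul]
  have hpow : lamt * ((1/2) * lamt ^ (ν/2 - 1)) = lamt ^ (ν/2) / 2 := by
    nth_rewrite 1 [← Real.rpow_one lamt]
    rw [show (ν/2 : ℝ) = 1 + (ν/2 - 1) by ring, Real.rpow_add hl]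
    ring
  rw [← mul_assoc, hpow]

open Set Metric in
private lemma aux_radial (v m : ℕ) (hv : 1 ≤ v) {lamt ρ : ℝ} (hl : 0 < lamt) (hρ : 0 < ρ) :
    ∫ x in {y : Fin v → ℝ | ∑ i, y i ^ 2 ≤ ρ},
        (∑ i, x i ^ 2) ^ m * Real.exp (-(∑ i, x i ^ 2) / (2 * lamt)) ∂volume
      = ((v : ℝ) * (Real.sqrt π ^ v / Real.Gamma ((v : ℝ) / 2 + 1)) *
          (lamt ^ (((v : ℝ) + 2 * m) / 2) / 2)) *
          ∫ t in (0:ℝ)..(ρ / lamt), t ^ (((v : ℝ) + 2 * m) / 2 - 1) * Real.exp (-t / 2) := by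
  haveI : Nonempty (Fin v) := Fin.pos_iff_nonempty.mp hv
  set E := EuclideanSpace ℝ (Fin v) with hE
  haveI : Nontrivial E := Module.nontrivial_of_finrank_pos (R := ℝ)
    (by rw [finrank_euclideanSpace_fin]; omega)
  have htrans := (EuclideanSpace.volume_preserving_symm_measurableEquiv_toLp
      (ι := Fin v)).setIntegral_preimage_emb
      (MeasurableEquiv.toLp 2 (Fin v → ℝ)).symm.measurableEmbedding
      (fun x => (∑ i, x i ^ 2) ^ m * Real.exp (-(∑ i, x i ^ 2) / (2 * lamt)))
      {y : Fin v → ℝ | ∑ i, y i ^ 2 ≤ ρ}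
  rw [← htrans]
  classical
  have hei : ∀ (x : E) (i : Fin v), (MeasurableEquiv.toLp 2 (Fin v → ℝ)).symm x i = x i :=
    fun _ _ => rfl
  simp only [hei]
  set g : ℝ → ℝ := fun r => (r ^ 2) ^ m * Real.exp (-(r ^ 2) / (2 * lamt)) with hg
  set F : ℝ → ℝ := Set.indicator {r : ℝ | r ^ 2 ≤ ρ} g with hF
  have hSE : (MeasurableEquiv.toLp 2 (Fin v → ℝ)).symm ⁻¹' {y : Fin v → ℝ | ∑ i, y i ^ 2 ≤ ρ}
      = (fun x : E => ‖x‖) ⁻¹' {r : ℝ | r ^ 2 ≤ ρ} := by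
    ext x
    simp only [Set.mem_preimage, Set.mem_setOf_eq]
    rw [EuclideanSpace.norm_eq, Real.sq_sqrt (by positivity)]
    simp [MeasurableEquiv.coe_toLp_symm, Real.norm_eq_abs, sq_abs]
  have hnorm : ∀ x : E, ∑ i, x i ^ 2 = ‖x‖ ^ 2 := by
    intro x
    rw [EuclideanSpace.norm_eq, Real.sq_sqrt (by positivity)]
    simp [Real.norm_eq_abs, sq_abs]
  have hmeasset : MeasurableSet ((fun x : E => ‖x‖) ⁻¹' {r : ℝ | r ^ 2 ≤ ρ}) := by
    exact measurable_norm (measurableSet_le (measurable_id.pow_const 2) measurable_const)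
  rw [hSE, ← integral_indicator hmeasset]
  have hind : ∀ x : E, ((fun x : E => ‖x‖) ⁻¹' {r : ℝ | r ^ 2 ≤ ρ}).indicator
      (fun x : E => (∑ i, x i ^ 2) ^ m * Real.exp (-(∑ i, x i ^ 2) / (2 * lamt))) x
      = F ‖x‖ := by
    intro x
    rw [hF, Set.indicator_apply, Set.indicator_apply]
    simp only [Set.mem_preimage, Set.mem_setOf_eq, hnorm x]
    rfl
  rw [integral_congr_ae (Filter.Eventually.of_forall hind)]
  rw [integral_fun_norm_addHaar (volume : Measure E) F]
  have hrank : Module.finrank ℝ E = v := finrank_euclideanSpace_fin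
  rw [hrank]
  have hvol : ((volume : Measure E) (Metric.ball 0 1)).toReal
      = Real.sqrt π ^ v / Real.Gamma ((v : ℝ) / 2 + 1) := by
    rw [show (volume : Measure E) = (volume : Measure (EuclideanSpace ℝ (Fin v))) from rfl,
      EuclideanSpace.volume_ball]
    simp only [ENNReal.ofReal_one, one_pow, one_mul, Fintype.card_fin]
    rw [ENNReal.toReal_ofReal (by positivity)]
  rw [measureReal_def, hvol]
  have h1d : ∫ y in Ioi (0:ℝ), y ^ (v - 1) • F y
      = (lamt ^ (((v : ℝ) + 2 * m) / 2) / 2) *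
        ∫ t in (0:ℝ)..(ρ / lamt), t ^ (((v : ℝ) + 2 * m) / 2 - 1) * Real.exp (-t / 2) := by
    rw [hF, hg]
    exact aux_oneD v m hv hl hρ
  rw [h1d]
  rw [nsmul_eq_mul, smul_eq_mul]
  ring

open Set Metric in
private lemma aux_sym (v : ℕ) {lamt ρ : ℝ} (k : Fin v) :
    (v : ℝ) * ∫ x in {y : Fin v → ℝ | ∑ i, y i ^ 2 ≤ ρ},
        x k ^ 2 * Real.exp (-(∑ i, x i ^ 2) / (2 * lamt)) ∂volume
      = ∫ x in {y : Fin v → ℝ | ∑ i, y i ^ 2 ≤ ρ},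
        (∑ i, x i ^ 2) * Real.exp (-(∑ i, x i ^ 2) / (2 * lamt)) ∂volume := by
  set S := {y : Fin v → ℝ | ∑ i, y i ^ 2 ≤ ρ} with hS
  have hSmeas : MeasurableSet S :=
    measurableSet_le (by fun_prop) measurable_const
  have hclosed : IsClosed S := isClosed_le (by fun_prop) continuous_const
  have hbdd : Bornology.IsBounded S := by
    apply (Metric.isBounded_closedBall (x := (0 : Fin v → ℝ)) (r := Real.sqrt ρ)).subset
    intro y hy
    rw [Metric.mem_closedBall, dist_zero_right,
      pi_norm_le_iff_of_nonneg (Real.sqrt_nonneg _)]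
    intro i
    rw [Real.norm_eq_abs]
    exact Real.abs_le_sqrt (le_trans (Finset.single_le_sum
      (f := fun j => y j ^ 2) (fun j _ => sq_nonneg _) (Finset.mem_univ i)) hy)
  have hcomp : IsCompact S := Metric.isCompact_of_isClosed_isBounded hclosed hbdd
  have hinteg : ∀ j : Fin v, IntegrableOn
      (fun x : Fin v → ℝ => x j ^ 2 * Real.exp (-(∑ i, x i ^ 2) / (2 * lamt))) S := by
    intro j
    exact ContinuousOn.integrableOn_compact hcomp (Continuous.continuousOn (by fun_prop))
  have hperm : ∀ j : Fin v,
      ∫ x in S, x k ^ 2 * Real.exp (-(∑ i, x i ^ 2) / (2 * lamt)) ∂volume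
      = ∫ x in S, x j ^ 2 * Real.exp (-(∑ i, x i ^ 2) / (2 * lamt)) ∂volume := by
    intro j
    set σ : Equiv.Perm (Fin v) := Equiv.swap j k with hσ
    set e := MeasurableEquiv.piCongrLeft (fun _ : Fin v => ℝ) σ with he
    have hmp := MeasureTheory.volume_measurePreserving_piCongrLeft (fun _ : Fin v => ℝ) σ
    have key := hmp.setIntegral_preimage_emb e.measurableEmbedding
      (fun y => y k ^ 2 * Real.exp (-(∑ i, y i ^ 2) / (2 * lamt))) S
    have hco : ∀ (x : Fin v → ℝ) (i : Fin v), e x (σ i) = x i := by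
      intro x i
      rw [he, MeasurableEquiv.coe_piCongrLeft]
      exact Equiv.piCongrLeft_apply_apply (fun _ : Fin v => ℝ) σ x i
    have hsum : ∀ x : Fin v → ℝ, ∑ i, (e x) i ^ 2 = ∑ i, x i ^ 2 := by
      intro x
      rw [← Equiv.sum_comp σ (fun i => (e x) i ^ 2)]
      exact Finset.sum_congr rfl fun i _ => by rw [hco]
    have hpre : e ⁻¹' S = S := by
      ext x
      simp only [Set.mem_preimage, hS, Set.mem_setOf_eq, hsum x]
    rw [hpre] at key
    rw [← key]
    apply setIntegral_congr_fun hSmeas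
    intro x _
    beta_reduce
    rw [hsum x]
    have hek : e x k = x j := by
      conv_lhs => rw [show k = σ j from (Equiv.swap_apply_left j k).symm]
      exact hco x j
    rw [hek]
  have hcount : ∑ j : Fin v, ∫ x in S, x j ^ 2 * Real.exp (-(∑ i, x i ^ 2) / (2 * lamt)) ∂volume
      = (v : ℝ) * ∫ x in S, x k ^ 2 * Real.exp (-(∑ i, x i ^ 2) / (2 * lamt)) ∂volume := by
    rw [Finset.sum_congr rfl (fun j _ => (hperm j).symm), Finset.sum_const, Finset.card_univ,
      Fintype.card_fin, nsmul_eq_mul]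
  rw [← hcount, ← integral_finset_sum _ (fun j _ => hinteg j)]
  apply setIntegral_congr_fun hSmeas
  intro x _
  beta_reduce
  rw [← Finset.sum_mul]

/-- Truncated second moment of an isotropic Gaussian over the ball of squared
radius `ρ`: `∫_{B_v(ρ)} x_k² g(x) dx = λ̃·F_{v+2}(ρ/λ̃)`; consequently, the
truncated second moment in Tallis' isotropic limit is
`μ_k = λ̃·F_{v+2}(ρ/λ̃)/F_v(ρ/λ̃)`. -/
theorem gaussian_ball_second_moment (v : ℕ) (hv : 1 ≤ v) (lamt ρ : ℝ)
    (hl : 0 < lamt) (hρ : 0 < ρ) (k : Fin v) :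
    (∫ x in {y : Fin v → ℝ | ∑ i, y i ^ 2 ≤ ρ},
        x k ^ 2 * ((2 * Real.pi * lamt) ^ (-(v : ℝ) / 2) *
          Real.exp (-(∑ i, x i ^ 2) / (2 * lamt))) ∂volume =
      lamt * chiCDF (v + 2) (ρ / lamt))
    ∧
    (∫ x in {y : Fin v → ℝ | ∑ i, y i ^ 2 ≤ ρ},
        x k ^ 2 * ((2 * Real.pi * lamt) ^ (-(v : ℝ) / 2) *
          Real.exp (-(∑ i, x i ^ 2) / (2 * lamt))) ∂volume) /
      (∫ x in {y : Fin v → ℝ | ∑ i, y i ^ 2 ≤ ρ},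
        (2 * Real.pi * lamt) ^ (-(v : ℝ) / 2) *
          Real.exp (-(∑ i, x i ^ 2) / (2 * lamt)) ∂volume) =
      lamt * chiCDF (v + 2) (ρ / lamt) / chiCDF v (ρ / lamt) := by
  have hπ := Real.pi_pos
  have hv0 : (0:ℝ) < v := by exact_mod_cast hv
  have h2pl : (0:ℝ) < 2 * Real.pi * lamt := by positivity
  set C : ℝ := (2 * Real.pi * lamt) ^ (-(v : ℝ) / 2) with hCdef
  -- basic rpow facts
  have hCeq : C = ((2:ℝ) ^ ((v:ℝ)/2) * π ^ ((v:ℝ)/2) * lamt ^ ((v:ℝ)/2))⁻¹ := by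
    rw [hCdef, neg_div, Real.rpow_neg h2pl.le]
    congr 1
    rw [Real.mul_rpow (by positivity) hl.le, Real.mul_rpow (by norm_num) hπ.le]
  have hsqrtpi : Real.sqrt π ^ v = π ^ ((v:ℝ)/2) := by
    rw [Real.sqrt_eq_rpow, ← Real.rpow_natCast (π ^ ((1:ℝ)/2)) v, ← Real.rpow_mul hπ.le]
    rw [show (1:ℝ)/2 * (v:ℕ) = (v:ℝ)/2 by ring]
  have hgpos : 0 < Real.Gamma ((v:ℝ)/2 + 1) := Real.Gamma_pos_of_pos (by positivity)
  have h2pos : (0:ℝ) < (2:ℝ) ^ ((v:ℝ)/2) := Real.rpow_pos_of_pos (by norm_num) _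
  have hppos : (0:ℝ) < π ^ ((v:ℝ)/2) := Real.rpow_pos_of_pos hπ _
  have hlpos : (0:ℝ) < lamt ^ ((v:ℝ)/2) := Real.rpow_pos_of_pos hl _
  -- numerator
  have hnum : ∫ x in {y : Fin v → ℝ | ∑ i, y i ^ 2 ≤ ρ},
      x k ^ 2 * (C * Real.exp (-(∑ i, x i ^ 2) / (2 * lamt))) ∂volume
      = lamt * chiCDF (v + 2) (ρ / lamt) := by
    have h1 : (fun x : Fin v → ℝ => x k ^ 2 * (C * Real.exp (-(∑ i, x i ^ 2) / (2 * lamt))))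
        = fun x => C * (x k ^ 2 * Real.exp (-(∑ i, x i ^ 2) / (2 * lamt))) := by
      funext x; ring
    rw [h1, integral_const_mul]
    have h2 := aux_sym v (lamt := lamt) (ρ := ρ) k
    have h3 := aux_radial v 1 hv hl hρ
    simp only [pow_one, Nat.cast_one, mul_one] at h3
    have h4 : ∫ x in {y : Fin v → ℝ | ∑ i, y i ^ 2 ≤ ρ},
        x k ^ 2 * Real.exp (-(∑ i, x i ^ 2) / (2 * lamt)) ∂volume
        = (v:ℝ)⁻¹ * (((v : ℝ) * (Real.sqrt π ^ v / Real.Gamma ((v : ℝ) / 2 + 1)) *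
            (lamt ^ (((v : ℝ) + 2) / 2) / 2)) *
            ∫ t in (0:ℝ)..(ρ / lamt), t ^ (((v : ℝ) + 2) / 2 - 1) * Real.exp (-t / 2)) := by
      rw [← h3, ← h2, ← mul_assoc, inv_mul_cancel₀ hv0.ne', one_mul]
    rw [h4]
    unfold chiCDF
    rw [hCeq, hsqrtpi]
    have hlam2 : lamt ^ (((v:ℝ) + 2) / 2) = lamt ^ ((v:ℝ)/2) * lamt := by
      rw [show ((v:ℝ) + 2)/2 = (v:ℝ)/2 + 1 by ring, Real.rpow_add hl, Real.rpow_one]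
    have h2v2 : (2:ℝ) ^ (((v:ℝ) + 2) / 2) = (2:ℝ) ^ ((v:ℝ)/2) * 2 := by
      rw [show ((v:ℝ) + 2)/2 = (v:ℝ)/2 + 1 by ring, Real.rpow_add (by norm_num), Real.rpow_one]
    have hgam2 : Real.Gamma (((v:ℝ) + 2) / 2) = Real.Gamma ((v:ℝ)/2 + 1) := by
      norm_num [show ((v:ℝ) + 2)/2 = (v:ℝ)/2 + 1 by ring]
    rw [hlam2, h2v2, hgam2]
    field_simp
  -- denominator
  have hden : ∫ x in {y : Fin v → ℝ | ∑ i, y i ^ 2 ≤ ρ},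
      C * Real.exp (-(∑ i, x i ^ 2) / (2 * lamt)) ∂volume
      = chiCDF v (ρ / lamt) := by
    rw [integral_const_mul]
    have h3 := aux_radial v 0 hv hl hρ
    simp only [pow_zero, Nat.cast_zero, mul_zero, add_zero, one_mul] at h3
    rw [h3]
    unfold chiCDF
    rw [hCeq, hsqrtpi]
    have hgam1 : Real.Gamma ((v:ℝ)/2 + 1) = ((v:ℝ)/2) * Real.Gamma ((v:ℝ)/2) := by
      rw [Real.Gamma_add_one (by positivity)]
    have hgpos' : 0 < Real.Gamma ((v:ℝ)/2) := Real.Gamma_pos_of_pos (by positivity)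
    rw [hgam1]
    field_simp
  constructor
  · exact hnum
  · rw [hnum, hden, mul_div_assoc]
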